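/- Let λ, μ be partitions with n nonnegative integer parts, and let F, F′ ⊆ {(i,j) : n ≥ i > j ≥ 1} be subsets such that the BiKogan face K_{λ,μ}(F,F′) is reduced. If (P,Q) ∈ K_{λ,μ}(F,F′), then ϖ(F,F′) ≤ *(w(P,Q)) in the Bruhat order. -/

import Mathlib

open scoped Classical

namespace KK

/-- The simple transposition `s_j = (j, j+1)` in `S_n` (1-indexed letters `1 ≤ j ≤ n-1`);
junk value `1` out of range. -/
def simpleRefl (n : ℕ) (j : ℕ) : Equiv.Perm (Fin n) :=
  if h : 1 ≤ j ∧ j ≤ n - 1 then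
    Equiv.swap ⟨j - 1, by omega⟩ ⟨j, by omega⟩
  else 1

/-- The permutation represented by a word in the simple transpositions. -/
def wordProd (n : ℕ) (l : List ℕ) : Equiv.Perm (Fin n) :=
  (l.map (simpleRefl n)).prod

/-- Coxeter length: minimal length of a word in simple transpositions representing `w`. -/
noncomputable def len (n : ℕ) (w : Equiv.Perm (Fin n)) : ℕ :=
  sInf {k | ∃ l : List ℕ, (∀ j ∈ l, 1 ≤ j ∧ j ≤ n - 1) ∧ l.length = k ∧ wordProd n l = w}

/-- A word is reduced if its letters are genuine simple-transposition indices and its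
length equals the Coxeter length of the permutation it represents. -/
def IsReduced (n : ℕ) (l : List ℕ) : Prop :=
  (∀ j ∈ l, 1 ≤ j ∧ j ≤ n - 1) ∧ len n (wordProd n l) = l.length

/-- Bruhat order on `S_n`: `u ≤ w` iff some reduced word for `w` contains a reduced word
for `u` as a subword. -/
def bruhatLE (n : ℕ) (u w : Equiv.Perm (Fin n)) : Prop :=
  ∃ l l' : List ℕ, IsReduced n l ∧ wordProd n l = w ∧
    l'.Sublist l ∧ IsReduced n l' ∧ wordProd n l' = u

/-- `m` is the greatest element of `K` in the Bruhat order (hence the unique maximal one). -/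
def IsBruhatGreatest (n : ℕ) (K : Set (Equiv.Perm (Fin n))) (m : Equiv.Perm (Fin n)) : Prop :=
  m ∈ K ∧ ∀ u ∈ K, bruhatLE n u m

/-- `m` is the least element of `K` in the Bruhat order (hence the unique minimal one). -/
def IsBruhatLeast (n : ℕ) (K : Set (Equiv.Perm (Fin n))) (m : Equiv.Perm (Fin n)) : Prop :=
  m ∈ K ∧ ∀ u ∈ K, bruhatLE n m u

/-- One step of the Demazure product: `w * s_j = max {w, w s_j}` in the Bruhat order. -/
noncomputable def demStep (n : ℕ) (w : Equiv.Perm (Fin n)) (j : ℕ) : Equiv.Perm (Fin n) :=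
  if len n w < len n (w * simpleRefl n j) then w * simpleRefl n j else w

/-- The Demazure product `*(w)` of a (not necessarily reduced) word. -/
noncomputable def demProd (n : ℕ) (l : List ℕ) : Equiv.Perm (Fin n) :=
  l.foldl (demStep n) 1

/-- The binary Demazure product of two permutations, `w * w' = max I(w)I(w')`. -/
noncomputable def demMul (n : ℕ) (w w' : Equiv.Perm (Fin n)) : Equiv.Perm (Fin n) :=
  if h : ∃ m, IsBruhatGreatest n
      {x | ∃ u v, bruhatLE n u w ∧ bruhatLE n v w' ∧ x = u * v} m
  then h.choose else 1

/-- The longest element `w₀` of `S_n`. -/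
def w0 (n : ℕ) : Equiv.Perm (Fin n) := Fin.revPerm



/-- `μ` is a partition with `n` nonnegative integer parts `μ 1 ≥ ⋯ ≥ μ n ≥ 0`. -/
def IsPartition (n : ℕ) (μ : ℕ → ℤ) : Prop :=
  (∀ i, 1 ≤ i → i < n → μ (i + 1) ≤ μ i) ∧ 0 ≤ μ n

/-- `(i, j)` indexes an entry strictly below the top in the triangular array:
`n ≥ i > j ≥ 1`. -/
def inTriangle (n : ℕ) (p : ℕ × ℕ) : Prop := 1 ≤ p.2 ∧ p.2 < p.1 ∧ p.1 ≤ n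

/-- A Gelfand–Tsetlin pattern of size `n`, encoded as a function `a : ℕ → ℕ → ℝ`
(value `a i j` for `n ≥ i ≥ j ≥ 1`, and `0` outside the triangle). -/
def IsGTArray (n : ℕ) (a : ℕ → ℕ → ℝ) : Prop :=
  (∀ i j, 1 ≤ j → j < i → i ≤ n →
      0 ≤ a i j - a (i - 1) j ∧ 0 ≤ a (i - 1) j - a i (j + 1)) ∧
  (∀ i j, j = 0 ∨ i < j ∨ n < i → a i j = 0)

/-- The Gelfand–Tsetlin polytope `GT(μ)`: GT patterns of size `n` with bottom row `μ`. -/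
def GTset (n : ℕ) (μ : ℕ → ℤ) : Set (ℕ → ℕ → ℝ) :=
  {a | IsGTArray n a ∧ ∀ j, 1 ≤ j → j ≤ n → a n j = (μ j : ℝ)}

/-- The integral points `GT_ℤ(μ)` of the Gelfand–Tsetlin polytope. -/
def GTZ (n : ℕ) (μ : ℕ → ℤ) : Set (ℕ → ℕ → ℝ) :=
  {a ∈ GTset n μ | ∀ i j, ∃ m : ℤ, a i j = (m : ℝ)}

/-- The weight of a GT pattern: `wt a i = Σ_{j=1}^i a i j − Σ_{j=1}^{i-1} a (i-1) j`. -/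
noncomputable def wt (a : ℕ → ℕ → ℝ) (i : ℕ) : ℝ :=
  (∑ j ∈ Finset.Icc 1 i, a i j) - ∑ j ∈ Finset.Icc 1 (i - 1), a (i - 1) j

/-- The pairs `(i,j)` with `n ≥ i > j ≥ 1` in increasing lexicographic order. -/
def pairsLex (n : ℕ) : List (ℕ × ℕ) :=
  (List.range' 2 (n - 1)).flatMap fun i => (List.range' 1 (i - 1)).map fun j => (i, j)

/-- The pairs `(i,j)` with `n ≥ i > j ≥ 1` in increasing order for the total order in
which `(i,j)` precedes `(i',j')` iff `i < i'`, or `i = i'` and `j > j'`. -/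
def pairsBar (n : ℕ) : List (ℕ × ℕ) :=
  (List.range' 2 (n - 1)).flatMap fun i => ((List.range' 1 (i - 1)).reverse).map fun j => (i, j)

/-- The pairs `(i,j)` with `n ≥ i > j ≥ 1` in decreasing order for the total order in
which `(i,j)` precedes `(i',j')` iff `i < i'`, or `i = i'` and `j > j'`:
`i` descending and, within each `i`, `j` ascending. -/
def pairsFin (n : ℕ) : List (ℕ × ℕ) :=
  ((List.range' 2 (n - 1)).reverse).flatMap fun i => (List.range' 1 (i - 1)).map fun j => (i, j)

/-- The word `𝔣(P)`: list the pairs `(i,j)` with `a (i-1) j = a i (j+1)` in the order of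
`pairsFin` and record the letter `j` for each. -/
noncomputable def fWord (n : ℕ) (a : ℕ → ℕ → ℝ) : List ℕ :=
  ((pairsFin n).filter fun p => a (p.1 - 1) p.2 = a p.1 (p.2 + 1)).map fun p => p.2

/-- The word `𝔦(Q)`: list the pairs `(i,j)` with `b i j = b (i-1) j` in increasing
lexicographic order and record the letter `i - j` for each. -/
noncomputable def iWord (n : ℕ) (b : ℕ → ℕ → ℝ) : List ℕ :=
  ((pairsLex n).filter fun p => b p.1 p.2 = b (p.1 - 1) p.2).map fun p => p.1 - p.2



/-- The sequence `d_t`, `1 ≤ t ≤ i+1`, used to define the crystal operators `e_i, f_i`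
(with the convention `a_{k,k+1} = 0` for `k ∈ {i-1, i}`). -/
noncomputable def dseq (a : ℕ → ℕ → ℝ) (i : ℕ) : ℕ → ℝ
  | 0 => 0
  | 1 => a i 1 - a (i + 1) 1
  | (t + 2) => dseq a i (t + 1) + a i (t + 1) + (if t + 2 = i + 1 then 0 else a i (t + 2))
      - (if t + 1 = i then 0 else a (i - 1) (t + 1)) - a (i + 1) (t + 2)

/-- `d = min {d_1, …, d_{i+1}}`. -/
noncomputable def dmin (a : ℕ → ℕ → ℝ) (i : ℕ) : ℝ :=
  ((Finset.Icc 1 (i + 1)).image (dseq a i)).min'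
    (Finset.Nonempty.image ⟨1, by simp⟩ _)

/-- `m`: the smallest index `t ∈ [1, i+1]` with `d_t = d`. -/
noncomputable def mIdx (a : ℕ → ℕ → ℝ) (i : ℕ) : ℕ :=
  sInf {t | t ∈ Finset.Icc 1 (i + 1) ∧ dseq a i t = dmin a i}

/-- `M`: the largest index `t ∈ [1, i+1]` with `d_t = d`. -/
noncomputable def MIdx (a : ℕ → ℕ → ℝ) (i : ℕ) : ℕ :=
  sSup {t | t ∈ Finset.Icc 1 (i + 1) ∧ dseq a i t = dmin a i}

/-- The raising crystal operator `e_i` (`none` plays the role of `0`). -/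
noncomputable def eOp (i : ℕ) (a : ℕ → ℕ → ℝ) : Option (ℕ → ℕ → ℝ) :=
  if dmin a i = 0 then none
  else some fun i' j' => if i' = i ∧ j' = mIdx a i then a i' j' + 1 else a i' j'

/-- The lowering crystal operator `f_i` (`none` plays the role of `0`). -/
noncomputable def fOp (i : ℕ) (a : ℕ → ℕ → ℝ) : Option (ℕ → ℕ → ℝ) :=
  if MIdx a i = i + 1 then none
  else some fun i' j' => if i' = i ∧ j' = MIdx a i then a i' j' - 1 else a i' j'

/-- `m`-fold iteration of a partial operator. -/
noncomputable def iterOp (op : (ℕ → ℕ → ℝ) → Option (ℕ → ℕ → ℝ)) :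
    ℕ → (ℕ → ℕ → ℝ) → Option (ℕ → ℕ → ℝ)
  | 0 => fun x => some x
  | (m + 1) => fun x => (op x).bind (iterOp op m)

/-- Apply `op i₁ ^ m₁ ∘ ⋯ ∘ op i_k ^ m_k` to `x`, given the list `[(i₁,m₁),…,(i_k,m_k)]`
(the last pair acts first). -/
noncomputable def applyWord (op : ℕ → (ℕ → ℕ → ℝ) → Option (ℕ → ℕ → ℝ)) :
    List (ℕ × ℕ) → (ℕ → ℕ → ℝ) → Option (ℕ → ℕ → ℝ)
  | [] => fun x => some x
  | (p :: rest) => fun x => (applyWord op rest x).bind (iterOp (op p.1) p.2)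

/-- The highest-weight element `G⁰_μ` of `GT_ℤ(μ)`: the element killed by every `e_i`. -/
noncomputable def G0 (n : ℕ) (μ : ℕ → ℤ) : ℕ → ℕ → ℝ :=
  if h : ∃ P, P ∈ GTZ n μ ∧ ∀ i, 1 ≤ i → i ≤ n - 1 → eOp i P = none then h.choose else 0

/-- The lowest-weight element `G*_μ` of `GT_ℤ(μ)`: the element killed by every `f_i`. -/
noncomputable def Gstar (n : ℕ) (μ : ℕ → ℤ) : ℕ → ℕ → ℝ :=
  if h : ∃ P, P ∈ GTZ n μ ∧ ∀ i, 1 ≤ i → i ≤ n - 1 → fOp i P = none then h.choose else 0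

/-- The Demazure crystal `D(μ, w)` computed from the reduced word `l` for `w`:
`{f_{i₁}^{m₁} ⋯ f_{i_k}^{m_k}(G⁰_μ)} ∩ GT_ℤ(μ)`. -/
noncomputable def demCrystal (n : ℕ) (μ : ℕ → ℤ) (l : List ℕ) : Set (ℕ → ℕ → ℝ) :=
  {P | P ∈ GTZ n μ ∧
    ∃ ms : List ℕ, ms.length = l.length ∧ applyWord fOp (l.zip ms) (G0 n μ) = some P}

/-- The opposite Demazure crystal `D(μ, w)^op` computed from the reduced word `l`
for `w·w₀`: `{e_{j₁}^{m₁} ⋯ e_{j_t}^{m_t}(G*_μ)} ∩ GT_ℤ(μ)`. -/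
noncomputable def opDemCrystal (n : ℕ) (μ : ℕ → ℤ) (l : List ℕ) : Set (ℕ → ℕ → ℝ) :=
  {P | P ∈ GTZ n μ ∧
    ∃ ms : List ℕ, ms.length = l.length ∧ applyWord eOp (l.zip ms) (Gstar n μ) = some P}

/-- `σ(F)`: the product of `s_{i-j}` over `(i,j) ∈ F` in increasing lexicographic order. -/
noncomputable def sigmaF (n : ℕ) (F : Finset (ℕ × ℕ)) : Equiv.Perm (Fin n) :=
  wordProd n (((pairsLex n).filter fun p => p ∈ F).map fun p => p.1 - p.2)

/-- `σ̄(F)`: the product of `s_j` over `(i,j) ∈ F` in increasing order for the total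
order in which `(i,j)` precedes `(i',j')` iff `i < i'`, or `i = i'` and `j > j'`. -/
noncomputable def sigmaBarF (n : ℕ) (F : Finset (ℕ × ℕ)) : Equiv.Perm (Fin n) :=
  wordProd n (((pairsBar n).filter fun p => p ∈ F).map fun p => p.2)

/-- The Kogan face `K(μ, F)`: the face of `GT(μ)` cut out by `a i j = a (i-1) j`,
`(i,j) ∈ F`. -/
def KoganFace (n : ℕ) (μ : ℕ → ℤ) (F : Finset (ℕ × ℕ)) : Set (ℕ → ℕ → ℝ) :=
  {a ∈ GTset n μ | ∀ p ∈ F, a p.1 p.2 = a (p.1 - 1) p.2}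

/-- The dual Kogan face `K̄(μ, F)`: the face of `GT(μ)` cut out by
`a (i-1) j = a i (j+1)`, `(i,j) ∈ F`. -/
def dualKoganFace (n : ℕ) (μ : ℕ → ℤ) (F : Finset (ℕ × ℕ)) : Set (ℕ → ℕ → ℝ) :=
  {a ∈ GTset n μ | ∀ p ∈ F, a (p.1 - 1) p.2 = a p.1 (p.2 + 1)}

/-- The BiKogan face `K_{λ,μ}(F, F')` of `GT(λ) × GT(μ)`. -/
def biKoganFace (n : ℕ) (lam μ : ℕ → ℤ) (F F' : Finset (ℕ × ℕ)) :
    Set ((ℕ → ℕ → ℝ) × (ℕ → ℕ → ℝ)) :=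
  {PQ | PQ.1 ∈ GTset n lam ∧ PQ.2 ∈ GTset n μ ∧
    (∀ p ∈ F, PQ.1 (p.1 - 1) p.2 = PQ.1 p.1 (p.2 + 1)) ∧
    (∀ p ∈ F', PQ.2 p.1 p.2 = PQ.2 (p.1 - 1) p.2)}

/-- `ϖ(F, F') = σ̄(F)⁻¹ · σ(F')`. -/
noncomputable def biVarpi (n : ℕ) (F F' : Finset (ℕ × ℕ)) : Equiv.Perm (Fin n) :=
  (sigmaBarF n F)⁻¹ * sigmaF n F'

/-- The BiKogan face `K_{λ,μ}(F, F')` is reduced if `ℓ(ϖ(F,F')) = |F| + |F'|`. -/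
def biKoganReduced (n : ℕ) (F F' : Finset (ℕ × ℕ)) : Prop :=
  len n (biVarpi n F F') = F.card + F'.card

section Core
variable {n : ℕ}

/-- All letters of a word are valid simple-reflection indices. -/
def vword (n : ℕ) (l : List ℕ) : Prop := ∀ j ∈ l, 1 ≤ j ∧ j ≤ n - 1

theorem wordProd_nil : wordProd n [] = 1 := rfl

theorem wordProd_append (l l' : List ℕ) :
    wordProd n (l ++ l') = wordProd n l * wordProd n l' := by
  simp [wordProd, List.prod_append]

theorem wordProd_cons (c : ℕ) (l : List ℕ) :
    wordProd n (c :: l) = simpleRefl n c * wordProd n l := by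
  simp [wordProd]

theorem wordProd_singleton (c : ℕ) : wordProd n [c] = simpleRefl n c := by
  simp [wordProd]

theorem simpleRefl_eq_swap {j : ℕ} (h1 : 1 ≤ j) (h2 : j ≤ n - 1) :
    simpleRefl n j = Equiv.swap ⟨j - 1, by omega⟩ ⟨j, by omega⟩ := by
  rw [simpleRefl, dif_pos ⟨h1, h2⟩]

theorem simpleRefl_spec {j : ℕ} (h1 : 1 ≤ j) (h2 : j ≤ n - 1) :
    ∃ p q : Fin n, (q : ℕ) = (p : ℕ) + 1 ∧ simpleRefl n j = Equiv.swap p q := by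
  exact ⟨⟨j - 1, by omega⟩, ⟨j, by omega⟩, by simp; omega, simpleRefl_eq_swap h1 h2⟩

theorem simpleRefl_mul_self (j : ℕ) : simpleRefl n j * simpleRefl n j = 1 := by
  rw [simpleRefl]
  split
  · exact Equiv.swap_mul_self _ _
  · exact one_mul 1

theorem simpleRefl_inv (j : ℕ) : (simpleRefl n j)⁻¹ = simpleRefl n j :=
  inv_eq_of_mul_eq_one_right (simpleRefl_mul_self j)

theorem exists_word (w : Equiv.Perm (Fin n)) :
    ∃ l : List ℕ, vword n l ∧ wordProd n l = w := by
  rcases n with - | m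
  · refine ⟨[], fun j hj => by simp at hj, ?_⟩
    exact Equiv.ext fun i => i.elim0
  · have hw : w ∈ Submonoid.closure
        (Set.range fun i : Fin m ↦ Equiv.swap i.castSucc i.succ) := by
      rw [Equiv.Perm.mclosure_swap_castSucc_succ m]; trivial
    induction hw using Submonoid.closure_induction with
    | one => exact ⟨[], fun j hj => by simp at hj, rfl⟩
    | mul x y _ _ hx hy =>
      obtain ⟨lx, hlx, hpx⟩ := hx
      obtain ⟨ly, hly, hpy⟩ := hy
      refine ⟨lx ++ ly, fun j hj => ?_, by rw [wordProd_append, hpx, hpy]⟩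
      rcases List.mem_append.1 hj with h | h
      · exact hlx j h
      · exact hly j h
    | mem x hx =>
      obtain ⟨i, rfl⟩ := hx
      refine ⟨[(i : ℕ) + 1], fun j hj => by simp at hj; omega, ?_⟩
      rw [wordProd_singleton, simpleRefl_eq_swap (by omega) (by simp)]
      congr 1 <;> exact Fin.ext (by simp)

theorem len_le {l : List ℕ} (hl : vword n l) : len n (wordProd n l) ≤ l.length :=
  Nat.sInf_le ⟨l, hl, rfl, rfl⟩

theorem len_le' {l : List ℕ} {w : Equiv.Perm (Fin n)} (hl : vword n l)
    (hw : wordProd n l = w) : len n w ≤ l.length := hw ▸ len_le hl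

theorem len_spec (w : Equiv.Perm (Fin n)) :
    ∃ l : List ℕ, vword n l ∧ l.length = len n w ∧ wordProd n l = w := by
  have hne : {k | ∃ l : List ℕ, (∀ j ∈ l, 1 ≤ j ∧ j ≤ n - 1) ∧ l.length = k ∧
      wordProd n l = w}.Nonempty := by
    obtain ⟨l, hl, hp⟩ := exists_word w
    exact ⟨l.length, l, hl, rfl, hp⟩
  exact Nat.sInf_mem hne

theorem len_one : len n (1 : Equiv.Perm (Fin n)) = 0 :=
  Nat.le_zero.1 (len_le (l := []) (fun j hj => by simp at hj))

theorem len_mul_simpleRefl_le {j : ℕ} (h1 : 1 ≤ j) (h2 : j ≤ n - 1)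
    (w : Equiv.Perm (Fin n)) :
    len n (w * simpleRefl n j) ≤ len n w + 1 := by
  obtain ⟨l, hl, hlen, hp⟩ := len_spec w
  have : wordProd n (l ++ [j]) = w * simpleRefl n j := by
    rw [wordProd_append, hp, wordProd_singleton]
  calc len n (w * simpleRefl n j) ≤ (l ++ [j]).length := len_le' (by
        intro k hk; rcases List.mem_append.1 hk with h | h
        exacts [hl k h, by simp at h; omega]) this
    _ = len n w + 1 := by simp [hlen]

end Core
section Exchange
variable {n : ℕ}

theorem flip_adj {p q x y : Fin n} (hpq : (q : ℕ) = (p : ℕ) + 1) (hxy : x < y)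
    (h : Equiv.swap p q y < Equiv.swap p q x) : x = p ∧ y = q := by
  have hqp : q ≠ p := by intro e; rw [e] at hpq; omega
  by_cases hxp : x = p
  · by_cases hyq : y = q
    · exact ⟨hxp, hyq⟩
    · exfalso
      have hyp : y ≠ p := by intro e; rw [e, ← hxp] at hxy; exact lt_irrefl _ hxy
      rw [hxp, Equiv.swap_apply_left, Equiv.swap_apply_of_ne_of_ne hyp hyq] at h
      -- h : y < q, hxy : p < y, q = p+1
      have h1 : (y : ℕ) < (q : ℕ) := h
      have h2 : (p : ℕ) < (y : ℕ) := hxp ▸ hxy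
      omega
  · exfalso
    by_cases hxq : x = q
    · have hyp : y ≠ p := fun e => by
        have : (y:ℕ) > (x:ℕ) := hxy
        rw [e] at this; rw [hxq] at this; omega
      have hyq : y ≠ q := fun e => by rw [e, ← hxq] at hxy; exact lt_irrefl _ hxy
      rw [hxq, Equiv.swap_apply_right, Equiv.swap_apply_of_ne_of_ne hyp hyq] at h
      have h1 : (y : ℕ) < (p : ℕ) := h
      have h2 : (x : ℕ) < (y : ℕ) := hxy
      have h3 : (x : ℕ) = q := by rw [hxq]
      omega
    · rw [Equiv.swap_apply_of_ne_of_ne hxp hxq] at h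
      by_cases hyp : y = p
      · rw [hyp, Equiv.swap_apply_left] at h
        have h1 : (q : ℕ) < (x : ℕ) := h
        have h2 : (x : ℕ) < (p : ℕ) := hyp ▸ hxy
        omega
      · by_cases hyq : y = q
        · rw [hyq, Equiv.swap_apply_right] at h
          have h1 : (p : ℕ) < (x : ℕ) := h
          have h2 : (x : ℕ) < (q : ℕ) := hyq ▸ hxy
          have h3 : (x : ℕ) ≠ (p : ℕ) := fun e => hxp (Fin.ext e)
          omega
        · rw [Equiv.swap_apply_of_ne_of_ne hyp hyq] at h
          exact absurd hxy (not_lt.2 (le_of_lt h))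

theorem exchange {L : List ℕ} (hL : vword n L) {a b : Fin n} (hab : a < b)
    (hw : wordProd n L b < wordProd n L a) :
    ∃ i < L.length, wordProd n (L.eraseIdx i) = wordProd n L * Equiv.swap a b := by
  induction L with
  | nil =>
    exfalso
    simp only [wordProd_nil, Equiv.Perm.one_apply] at hw
    exact absurd hab (not_lt.2 (le_of_lt hw))
  | cons c T ih =>
    have hc := hL c (by simp)
    have hT : vword n T := fun j hj => hL j (by simp [hj])
    set v := wordProd n T with hv
    have hprod : wordProd n (c :: T) = simpleRefl n c * v := wordProd_cons c T
    rcases lt_trichotomy (v a) (v b) with hlt | heq | hgt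
    · -- flip at this letter
      obtain ⟨p, q, hpq, hs⟩ := simpleRefl_spec hc.1 hc.2
      have hw' : Equiv.swap p q (v b) < Equiv.swap p q (v a) := by
        have e1 : wordProd n (c :: T) a = Equiv.swap p q (v a) := by
          rw [hprod, hs]; rfl
        have e2 : wordProd n (c :: T) b = Equiv.swap p q (v b) := by
          rw [hprod, hs]; rfl
        rw [e1, e2] at hw; exact hw
      obtain ⟨hva, hvb⟩ := flip_adj hpq hlt hw'
      refine ⟨0, by simp, ?_⟩
      have hconj : simpleRefl n c = v * Equiv.swap a b * v⁻¹ := by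
        rw [hs, ← hva, ← hvb]; exact Equiv.swap_apply_apply v a b
      show wordProd n T = wordProd n (c :: T) * Equiv.swap a b
      rw [hprod, hconj]
      group
      simp [Equiv.swap_mul_self]
      rfl
    · exact absurd (v.injective heq) (ne_of_lt hab)
    · obtain ⟨i, hi, heq⟩ := ih hT hgt
      refine ⟨i + 1, by simpa using hi, ?_⟩
      have : (c :: T).eraseIdx (i + 1) = c :: T.eraseIdx i := rfl
      rw [this, wordProd_cons, heq, hprod, mul_assoc]

theorem len_step_lt {w : Equiv.Perm (Fin n)} {a b : Fin n} (hab : a < b)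
    (hv : w b < w a) : len n (w * Equiv.swap a b) < len n w := by
  obtain ⟨l, hl, hlen, hp⟩ := len_spec w
  obtain ⟨i, hi, heq⟩ := exchange hl hab (by rw [hp]; exact hv)
  have hsub : (l.eraseIdx i).Sublist l := List.eraseIdx_sublist l i
  have hv' : vword n (l.eraseIdx i) := fun j hj => hl j (hsub.mem hj)
  have hle : len n (w * Equiv.swap a b) ≤ (l.eraseIdx i).length :=
    len_le' hv' (by rw [heq, hp])
  have hlen' : (l.eraseIdx i).length = l.length - 1 := by
    rw [List.length_eraseIdx]; simp [hi]
  omega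

theorem len_step_gt {w : Equiv.Perm (Fin n)} {a b : Fin n} (hab : a < b)
    (hv : w a < w b) : len n w < len n (w * Equiv.swap a b) := by
  have := len_step_lt hab (a := a) (b := b) (w := w * Equiv.swap a b)
    (by rw [Equiv.Perm.mul_apply, Equiv.Perm.mul_apply, Equiv.swap_apply_left,
      Equiv.swap_apply_right]; exact hv)
  rwa [mul_assoc, Equiv.swap_mul_self, mul_one] at this

theorem len_swap_lt_iff {w : Equiv.Perm (Fin n)} {a b : Fin n} (hab : a < b) :
    len n (w * Equiv.swap a b) < len n w ↔ w b < w a := by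
  constructor
  · intro h
    rcases lt_trichotomy (w a) (w b) with h1 | h1 | h1
    · exact absurd h (not_lt.2 (le_of_lt (len_step_gt hab h1)))
    · exact absurd (w.injective h1) (ne_of_lt hab)
    · exact h1
  · exact len_step_lt hab

theorem len_swap_ne {w : Equiv.Perm (Fin n)} {a b : Fin n} (hab : a ≠ b) :
    len n (w * Equiv.swap a b) ≠ len n w := by
  rcases hab.lt_or_gt with h | h
  · rcases lt_trichotomy (w a) (w b) with h1 | h1 | h1
    · exact ne_of_gt (len_step_gt h h1)
    · exact absurd (w.injective h1) hab
    · exact ne_of_lt (len_step_lt h h1)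
  · rw [Equiv.swap_comm]
    rcases lt_trichotomy (w b) (w a) with h1 | h1 | h1
    · exact ne_of_gt (len_step_gt h h1)
    · exact absurd (w.injective h1) hab.symm
    · exact ne_of_lt (len_step_lt h h1)

end Exchange

section ChainOrder
variable {n : ℕ}

/-- Chain (Bruhat) order: `Chain n u w` means there is a descending chain from `w`
down to `u` by right multiplications by transpositions, each reducing an inversion. -/
inductive Chain (n : ℕ) (u : Equiv.Perm (Fin n)) : Equiv.Perm (Fin n) → Prop
  | refl : Chain n u u
  | step {w : Equiv.Perm (Fin n)} (a b : Fin n) (hab : a < b) (hv : w b < w a)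
      (h : Chain n u (w * Equiv.swap a b)) : Chain n u w

theorem Chain.trans {u v w : Equiv.Perm (Fin n)} (h1 : Chain n u v) (h2 : Chain n v w) :
    Chain n u w := by
  induction h2 with
  | refl => exact h1
  | step a b hab hv _ ih => exact Chain.step a b hab hv ih

theorem Chain.len_le {u w : Equiv.Perm (Fin n)} (h : Chain n u w) : len n u ≤ len n w := by
  induction h with
  | refl => exact le_rfl
  | step a b hab hv _ ih => exact le_trans ih (le_of_lt (len_step_lt hab hv))

/-- If right multiplication by a swap does not increase length, it gives a chain step. -/
theorem chain_swap_of_len_le {w : Equiv.Perm (Fin n)} {a b : Fin n} (hab : a ≠ b)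
    (h : len n (w * Equiv.swap a b) ≤ len n w) : Chain n (w * Equiv.swap a b) w := by
  rcases hab.lt_or_gt with hlt | hlt
  · rcases lt_trichotomy (w a) (w b) with h1 | h1 | h1
    · exact absurd h (not_le.2 (len_step_gt hlt h1))
    · exact absurd (w.injective h1) hab
    · exact Chain.step a b hlt h1 Chain.refl
  · rw [Equiv.swap_comm]
    rcases lt_trichotomy (w b) (w a) with h1 | h1 | h1
    · exact absurd h (not_le.2 (by rw [Equiv.swap_comm]; exact len_step_gt hlt h1))
    · exact absurd (w.injective h1) hab.symm
    · exact Chain.step b a hlt h1 Chain.refl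

theorem chain_s_of_descent {j : ℕ} (h1 : 1 ≤ j) (h2 : j ≤ n - 1)
    {w : Equiv.Perm (Fin n)} (h : len n (w * simpleRefl n j) < len n w) :
    Chain n (w * simpleRefl n j) w := by
  obtain ⟨p, q, hpq, hs⟩ := simpleRefl_spec h1 h2
  rw [hs] at h ⊢
  exact chain_swap_of_len_le (fun e => by rw [e] at hpq; omega) (le_of_lt h)

theorem chain_ascent {j : ℕ} (h1 : 1 ≤ j) (h2 : j ≤ n - 1)
    {w : Equiv.Perm (Fin n)} (h : len n w < len n (w * simpleRefl n j)) :
    Chain n w (w * simpleRefl n j) := by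
  have := chain_s_of_descent h1 h2 (w := w * simpleRefl n j)
    (by rwa [mul_assoc, simpleRefl_mul_self, mul_one])
  rwa [mul_assoc, simpleRefl_mul_self, mul_one] at this

theorem len_simpleRefl_ne {j : ℕ} (h1 : 1 ≤ j) (h2 : j ≤ n - 1)
    (w : Equiv.Perm (Fin n)) : len n (w * simpleRefl n j) ≠ len n w := by
  obtain ⟨p, q, hpq, hs⟩ := simpleRefl_spec h1 h2
  rw [hs]
  exact len_swap_ne (fun e => by rw [e] at hpq; omega)

end ChainOrder
section Deletion
variable {n : ℕ}

theorem exists_reduced_sublist_aux : ∀ (N : ℕ) (L : List ℕ), L.length ≤ N → vword n L →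
    ∃ R : List ℕ, R.Sublist L ∧ wordProd n R = wordProd n L ∧
      R.length = len n (wordProd n L) := by
  intro N
  induction N with
  | zero =>
    intro L hlen _
    have : L = [] := List.eq_nil_of_length_eq_zero (Nat.le_zero.1 hlen)
    subst this
    exact ⟨[], List.Sublist.refl _, rfl, by rw [wordProd_nil, len_one]; rfl⟩
  | succ N ih =>
    intro L hlen hv
    rcases eq_or_lt_of_le (len_le hv) with heq | hlt
    · exact ⟨L, List.Sublist.refl _, rfl, heq.symm⟩
    · have hPex : len n (wordProd n (L.take L.length)) < L.length := by
        rw [List.take_length]; exact hlt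
      have hex : ∃ i, len n (wordProd n (L.take i)) < i := ⟨L.length, hPex⟩
      set i₀ := Nat.find hex with hi₀
      have hP0 : len n (wordProd n (L.take i₀)) < i₀ := Nat.find_spec hex
      have hi₀pos : 1 ≤ i₀ := by
        rcases Nat.eq_zero_or_pos i₀ with h | h
        · rw [h] at hP0; omega
        · exact h
      have hi₀le : i₀ ≤ L.length := Nat.find_min' hex hPex
      set T := L.take (i₀ - 1) with hT
      have hTsub : T.Sublist L := List.take_sublist _ _
      have hTlen : T.length = i₀ - 1 := by
        rw [hT, List.length_take]; omega
      have hTv : vword n T := fun j hj => hv j (hTsub.mem hj)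
      have hTred : len n (wordProd n T) = i₀ - 1 := by
        have h1 : len n (wordProd n T) ≤ i₀ - 1 := hTlen ▸ len_le hTv
        have h2 : ¬ len n (wordProd n T) < i₀ - 1 := by
          rw [hT]; exact Nat.find_min hex (by omega)
        omega
      have hidx : i₀ - 1 < L.length := by omega
      set c := L.get ⟨i₀ - 1, hidx⟩ with hc
      have hcv : 1 ≤ c ∧ c ≤ n - 1 := hv c (List.get_mem _ _)
      have htake : L.take i₀ = T ++ [c] := by
        have h1 : i₀ = (i₀ - 1) + 1 := by omega
        rw [h1, List.take_succ, hT]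
        congr 1
        rw [List.getElem?_eq_getElem hidx]
        rfl
      have hprodtake : wordProd n (L.take i₀) = wordProd n T * simpleRefl n c := by
        rw [htake, wordProd_append, wordProd_singleton]
      have hlt2 : len n (wordProd n T * simpleRefl n c) < len n (wordProd n T) := by
        have h1 : len n (wordProd n T * simpleRefl n c) < i₀ := by
          rw [← hprodtake]; exact hP0
      
        have h2 := len_simpleRefl_ne hcv.1 hcv.2 (wordProd n T)
        omega
      obtain ⟨p, q, hpq, hs⟩ := simpleRefl_spec hcv.1 hcv.2
      have hpq' : p < q := by rw [Fin.lt_def]; omega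
      have hdesc : (wordProd n T) q < (wordProd n T) p := by
        rw [hs] at hlt2
        exact (len_swap_lt_iff hpq').1 hlt2
      obtain ⟨k, hk, hkeq⟩ := exchange hTv hpq' hdesc
      set W := T.eraseIdx k with hW
      have hWprod : wordProd n W = wordProd n (L.take i₀) := by
        rw [hW, hkeq, hprodtake, hs]
      set L' := W ++ L.drop i₀ with hL'
      have hL'sub : L'.Sublist L := by
        have h1 : W.Sublist (T ++ [c]) :=
          (List.eraseIdx_sublist T k).trans (List.sublist_append_left T [c])
        rw [← htake] at h1
        have h2 := List.Sublist.append h1 (List.Sublist.refl (L.drop i₀))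
        rwa [List.take_append_drop] at h2
      have hL'prod : wordProd n L' = wordProd n L := by
        rw [hL', wordProd_append, hWprod, ← wordProd_append, List.take_append_drop]
      have hL'len : L'.length ≤ N := by
        have h1 : W.length = T.length - 1 := by
          rw [hW, List.length_eraseIdx]; simp [hk]
        have h2 : L'.length = W.length + (L.length - i₀) := by
          rw [hL', List.length_append, List.length_drop]
      
        omega
      obtain ⟨R, h1, h2, h3⟩ := ih L' hL'len (fun j hj => hv j (hL'sub.mem hj))
      exact ⟨R, h1.trans hL'sub, by rw [h2, hL'prod], by rw [h3, hL'prod]⟩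

theorem exists_reduced_sublist (L : List ℕ) (hv : vword n L) :
    ∃ R : List ℕ, R.Sublist L ∧ wordProd n R = wordProd n L ∧
      R.length = len n (wordProd n L) :=
  exists_reduced_sublist_aux L.length L le_rfl hv

/-- P2: a chain relation yields a reduced subword of any word for the top element. -/
theorem chain_subword {u x : Equiv.Perm (Fin n)} (h : Chain n u x) :
    ∀ L : List ℕ, vword n L → wordProd n L = x →
      ∃ U : List ℕ, U.Sublist L ∧ wordProd n U = u ∧ U.length = len n u := by
  induction h with
  | refl =>
    intro L hv hp
    obtain ⟨R, h1, h2, h3⟩ := exists_reduced_sublist L hv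
    exact ⟨R, h1, by rw [h2, hp], by rw [h3, hp]⟩
  | step a b hab hval hsub ih =>
    intro L hLv hLp
    obtain ⟨i, hi, heq⟩ := exchange hLv hab (by rw [hLp]; exact hval)
    obtain ⟨U, h1, h2, h3⟩ := ih (L.eraseIdx i)
      (fun j hj => hLv j ((List.eraseIdx_sublist L i).mem hj))
      (by rw [heq, hLp])
    exact ⟨U, h1.trans (List.eraseIdx_sublist L i), h2, h3⟩

end Deletion
section Lifting
variable {n : ℕ}

theorem three_step {x : Equiv.Perm (Fin n)} {c₁ c₂ c₃ : Fin n} (h12 : c₁ < c₂)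
    (h23 : c₂ < c₃) (v1 : x c₂ < x c₁) (v2 : x c₃ < x c₂) :
    len n (x * Equiv.swap c₁ c₃) + 3 ≤ len n x := by
  have h13 : c₁ < c₃ := h12.trans h23
  set z₁ := x * Equiv.swap c₁ c₂ with hz₁
  have l1 : len n z₁ < len n x := len_step_lt h12 v1
  have e1a : z₁ c₂ = x c₁ := by
    rw [hz₁, Equiv.Perm.mul_apply, Equiv.swap_apply_right]
  have e1b : z₁ c₃ = x c₃ := by
    rw [hz₁, Equiv.Perm.mul_apply,
      Equiv.swap_apply_of_ne_of_ne (ne_of_gt h13) (ne_of_gt h23)]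
  have e1c : z₁ c₁ = x c₂ := by
    rw [hz₁, Equiv.Perm.mul_apply, Equiv.swap_apply_left]
  set z₂ := z₁ * Equiv.swap c₂ c₃ with hz₂
  have l2 : len n z₂ < len n z₁ := len_step_lt h23 (by rw [e1a, e1b]; exact v2.trans v1)
  have e2a : z₂ c₁ = x c₂ := by
    rw [hz₂, Equiv.Perm.mul_apply,
      Equiv.swap_apply_of_ne_of_ne (ne_of_lt h12) (ne_of_lt h13), e1c]
  have e2b : z₂ c₂ = x c₃ := by
    rw [hz₂, Equiv.Perm.mul_apply, Equiv.swap_apply_left, e1b]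
  have l3 : len n (z₂ * Equiv.swap c₁ c₂) < len n z₂ :=
    len_step_lt h12 (by rw [e2a, e2b]; exact v2)
  have key : z₂ * Equiv.swap c₁ c₂ = x * Equiv.swap c₁ c₃ := by
    have hswp : Equiv.swap c₂ c₁ * Equiv.swap c₃ c₂ * Equiv.swap c₂ c₁ =
        Equiv.swap c₁ c₃ :=
      Equiv.swap_mul_swap_mul_swap (ne_of_gt h23) (ne_of_gt h13)
    rw [hz₂, hz₁, mul_assoc, mul_assoc, ← mul_assoc (Equiv.swap c₁ c₂)]
    congr 1
    rw [Equiv.swap_comm c₁ c₂, Equiv.swap_comm c₂ c₃]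
    exact hswp
  rw [key] at l3
  omega

theorem claimC {w : Equiv.Perm (Fin n)} {a b p q : Fin n}
    (hpq : (q : ℕ) = (p : ℕ) + 1) (hab : a < b) (hv : w b < w a)
    (hwd : w q < w p) (hya : (w * Equiv.swap a b) p < (w * Equiv.swap a b) q)
    (hlen : len n w = len n (w * Equiv.swap a b) + 1) :
    Equiv.swap a b = Equiv.swap p q := by
  have hpqlt : p < q := by rw [Fin.lt_def]; omega
  by_cases hap : a = p
  · by_cases hbq : b = q
    · rw [hap, hbq]
    · -- a = p, b ≠ q ⇒ b > q : three-step contradiction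
      exfalso
      have hbgt : q < b := by
        rw [Fin.lt_def]
        have h1 : (p : ℕ) < (b : ℕ) := hap ▸ hab
        have h2 : (b : ℕ) ≠ (q : ℕ) := fun e => hbq (Fin.ext e)
        omega
      have eyp : (w * Equiv.swap a b) p = w b := by
        rw [Equiv.Perm.mul_apply, ← hap, Equiv.swap_apply_left]
      have eyq : (w * Equiv.swap a b) q = w q := by
        rw [Equiv.Perm.mul_apply, Equiv.swap_apply_of_ne_of_ne
          (fun e => by rw [e, hap] at hpq; omega) (ne_of_lt hbgt)]
      rw [eyp, eyq] at hya
      have h3 := three_step hpqlt hbgt hwd hya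
      rw [← hap] at h3
      omega
  · by_cases haq : a = q
    · exfalso
      have eyp : (w * Equiv.swap a b) p = w p := by
        rw [Equiv.Perm.mul_apply, Equiv.swap_apply_of_ne_of_ne
          (fun e => hap e.symm)
          (fun e => by
            have h1 : (a : ℕ) < (b : ℕ) := hab
            rw [← e, haq] at h1; omega)]
      have eyq : (w * Equiv.swap a b) q = w b := by
        rw [Equiv.Perm.mul_apply, ← haq, Equiv.swap_apply_left]
      rw [eyp, eyq] at hya
      rw [haq] at hv
      exact lt_irrefl _ ((hya.trans hv).trans hwd)
    · by_cases hbp : b = p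
      · exfalso
        have eyp : (w * Equiv.swap a b) p = w a := by
          rw [Equiv.Perm.mul_apply, ← hbp, Equiv.swap_apply_right]
        have eyq : (w * Equiv.swap a b) q = w q := by
          rw [Equiv.Perm.mul_apply, Equiv.swap_apply_of_ne_of_ne
            (fun e => haq e.symm)
            (fun e => by rw [e, hbp] at hpq; omega)]
        rw [eyp, eyq] at hya
        rw [hbp] at hv
        exact lt_irrefl _ ((hv.trans hya).trans hwd)
      · by_cases hbq : b = q
        · exfalso
          have halt : a < p := by
            rw [Fin.lt_def]
            have h1 : (a : ℕ) < (q : ℕ) := hbq ▸ hab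
            have h2 : (a : ℕ) ≠ (p : ℕ) := fun e => hap (Fin.ext e)
            omega
          have eyp : (w * Equiv.swap a b) p = w p := by
            rw [Equiv.Perm.mul_apply, Equiv.swap_apply_of_ne_of_ne
              (fun e => hap e.symm) (fun e => hbp e.symm)]
          have eyq : (w * Equiv.swap a b) q = w a := by
            rw [Equiv.Perm.mul_apply, ← hbq, Equiv.swap_apply_right]
          rw [eyp, eyq] at hya
          have h3 := three_step halt hpqlt hya hwd
          rw [← hbq] at h3
          omega
        · exfalso
          have eyp : (w * Equiv.swap a b) p = w p := by
            rw [Equiv.Perm.mul_apply, Equiv.swap_apply_of_ne_of_ne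
              (fun e => hap e.symm) (fun e => hbp e.symm)]
          have eyq : (w * Equiv.swap a b) q = w q := by
            rw [Equiv.Perm.mul_apply, Equiv.swap_apply_of_ne_of_ne
              (fun e => haq e.symm) (fun e => hbq e.symm)]
          rw [eyp, eyq] at hya
          exact lt_irrefl _ (hya.trans hwd)

theorem AB {j : ℕ} (h1 : 1 ≤ j) (h2 : j ≤ n - 1) : ∀ N : ℕ,
    (∀ u y : Equiv.Perm (Fin n), Chain n u y →
        len n u < len n (u * simpleRefl n j) →
        len n y < len n (y * simpleRefl n j) →
        len n (y * simpleRefl n j) ≤ N →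
        Chain n (u * simpleRefl n j) (y * simpleRefl n j)) ∧
    (∀ u x : Equiv.Perm (Fin n), Chain n u x →
        len n (x * simpleRefl n j) < len n x →
        len n x ≤ N →
        Chain n (u * simpleRefl n j) x ∧
          (len n u < len n (u * simpleRefl n j) → Chain n u (x * simpleRefl n j))) := by
  intro N
  induction N using Nat.strong_induction_on with
  | _ N ih =>
  obtain ⟨p, q, hpq, hs⟩ := simpleRefl_spec (n := n) h1 h2
  have hpqlt : p < q := by rw [Fin.lt_def]; omega
  have hlen_s_le : ∀ w : Equiv.Perm (Fin n),
      len n (w * simpleRefl n j) ≤ len n w + 1 := len_mul_simpleRefl_le h1 h2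
  have hlen_le_s : ∀ w : Equiv.Perm (Fin n),
      len n w ≤ len n (w * simpleRefl n j) + 1 := by
    intro w
    have := len_mul_simpleRefl_le h1 h2 (w * simpleRefl n j)
    rwa [mul_assoc, simpleRefl_mul_self, mul_one] at this
  have hne : ∀ w : Equiv.Perm (Fin n),
      len n (w * simpleRefl n j) ≠ len n w := len_simpleRefl_ne h1 h2
  have hsane : ∀ a b : Fin n, a ≠ b →
      simpleRefl n j a ≠ simpleRefl n j b :=
    fun a b hab e => hab ((simpleRefl n j).injective e)
  have hconj : ∀ (w : Equiv.Perm (Fin n)) (a b : Fin n),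
      (w * Equiv.swap a b) * simpleRefl n j =
        (w * simpleRefl n j) *
          Equiv.swap (simpleRefl n j a) (simpleRefl n j b) := by
    intro w a b
    rw [Equiv.swap_apply_apply, simpleRefl_inv]
    simp only [mul_assoc]
    rw [show simpleRefl n j * (simpleRefl n j * (Equiv.swap a b * simpleRefl n j))
        = Equiv.swap a b * simpleRefl n j from by
      rw [← mul_assoc, simpleRefl_mul_self, one_mul]]
  -- B part
  have hB : ∀ u y : Equiv.Perm (Fin n), Chain n u y →
      len n u < len n (u * simpleRefl n j) →
      len n y < len n (y * simpleRefl n j) →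
      len n (y * simpleRefl n j) ≤ N →
      Chain n (u * simpleRefl n j) (y * simpleRefl n j) := by
    intro u y hchain hu
    induction hchain with
    | refl => intro _ _; exact Chain.refl
    | @step w a b hab hv hsub ihc =>
      intro hy hN
      have hzlt : len n (w * Equiv.swap a b) < len n w := len_step_lt hab hv
      rcases lt_trichotomy (len n (w * Equiv.swap a b * simpleRefl n j))
        (len n (w * Equiv.swap a b)) with hzd | hze | hza
      · -- z has a descent at s : use A at lower level
        have hNz : len n (w * Equiv.swap a b) < N := by
          have := hlen_s_le w
          omega
        obtain ⟨hA1, _⟩ := (ih (len n (w * Equiv.swap a b)) hNz).2 u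
          (w * Equiv.swap a b) hsub hzd le_rfl
        have c1 : Chain n (w * Equiv.swap a b) w := Chain.step a b hab hv Chain.refl
        have c2 : Chain n w (w * simpleRefl n j) := chain_ascent h1 h2 hy
        exact (hA1.trans c1).trans c2
      · exact absurd hze (hne _)
      · -- z ascent: use chain induction hypothesis
        have hzsN : len n (w * Equiv.swap a b * simpleRefl n j) ≤ N := by
          have := hlen_s_le (w * Equiv.swap a b)
          omega
        have hUZ := ihc hza hzsN
        have hle : len n (w * Equiv.swap a b * simpleRefl n j) ≤
            len n (w * simpleRefl n j) := by
          have := hlen_s_le (w * Equiv.swap a b)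
          omega
        have hstep : Chain n (w * Equiv.swap a b * simpleRefl n j)
            (w * simpleRefl n j) := by
          rw [hconj w a b]
          exact chain_swap_of_len_le (hsane a b (ne_of_lt hab))
            (by rw [← hconj w a b]; exact hle)
        exact hUZ.trans hstep
  refine ⟨hB, ?_⟩
  -- A part
  intro u x hchain
  induction hchain with
  | refl =>
    intro hxd _
    exact ⟨chain_s_of_descent h1 h2 hxd,
      fun hu => absurd hu (not_lt.2 (le_of_lt hxd))⟩
  | @step w a b hab hv hsub ihc =>
    intro hwd hN
    have hzlt : len n (w * Equiv.swap a b) < len n w := len_step_lt hab hv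
    have hstepzw : Chain n (w * Equiv.swap a b) w := Chain.step a b hab hv Chain.refl
    rcases lt_trichotomy (len n (w * Equiv.swap a b * simpleRefl n j))
      (len n (w * Equiv.swap a b)) with hzd | hze | hza
    · -- z descent
      obtain ⟨P1, P2⟩ := ihc hzd (by omega)
      refine ⟨P1.trans hstepzw, fun hu => ?_⟩
      have hy := P2 hu
      have hle : len n (w * Equiv.swap a b * simpleRefl n j) ≤
          len n (w * simpleRefl n j) := by
        have := hlen_le_s w
        omega
      have hstep : Chain n (w * Equiv.swap a b * simpleRefl n j)
          (w * simpleRefl n j) := by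
        rw [hconj w a b]
        exact chain_swap_of_len_le (hsane a b (ne_of_lt hab))
          (by rw [← hconj w a b]; exact hle)
      exact hy.trans hstep
    · exact absurd hze (hne _)
    · rcases le_or_gt (len n (w * Equiv.swap a b * simpleRefl n j))
        (len n (w * simpleRefl n j)) with hle | hgt
      · -- case 2a
        have hzsws : Chain n (w * Equiv.swap a b * simpleRefl n j)
            (w * simpleRefl n j) := by
          rw [hconj w a b]
          exact chain_swap_of_len_le (hsane a b (ne_of_lt hab))
            (by rw [← hconj w a b]; exact hle)
        have hwsw : Chain n (w * simpleRefl n j) w := chain_s_of_descent h1 h2 hwd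
        have hzzs : Chain n (w * Equiv.swap a b)
            (w * Equiv.swap a b * simpleRefl n j) := chain_ascent h1 h2 hza
        constructor
        · rcases lt_trichotomy (len n u) (len n (u * simpleRefl n j)) with hu | hu | hu
          · have hNzs : len n (w * Equiv.swap a b * simpleRefl n j) < N := by omega
            have hBlow := (ih _ hNzs).1 u (w * Equiv.swap a b) hsub hu hza le_rfl
            exact (hBlow.trans hzsws).trans hwsw
          · exact absurd hu.symm (hne _)
          · exact ((chain_s_of_descent h1 h2 hu).trans hsub).trans hstepzw
        · intro hu
          exact (hsub.trans hzzs).trans hzsws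
      · -- case 2b : forced y = w * s
        have e1 := hlen_s_le (w * Equiv.swap a b)
        have e2 := hlen_le_s w
        have hlenw : len n w = len n (w * Equiv.swap a b) + 1 := by omega
        have hwdval : w q < w p := by
          rw [hs] at hwd
          exact (len_swap_lt_iff hpqlt).1 hwd
        have hyaval : (w * Equiv.swap a b) p < (w * Equiv.swap a b) q := by
          rcases lt_trichotomy ((w * Equiv.swap a b) p) ((w * Equiv.swap a b) q)
            with h' | h' | h'
          · exact h'
          · exact absurd ((w * Equiv.swap a b).injective h') (ne_of_lt hpqlt)
          · exfalso
            have := len_step_lt hpqlt h'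
            rw [← hs] at this
            omega
        have hC := claimC hpq hab hv hwdval hyaval hlenw
        have hzws : w * Equiv.swap a b = w * simpleRefl n j := by rw [hC, hs]
        constructor
        · rcases lt_trichotomy (len n u) (len n (u * simpleRefl n j)) with hu | hu | hu
          · have hzsle : len n (w * Equiv.swap a b * simpleRefl n j) ≤ N := by omega
            have hBsame := hB u (w * Equiv.swap a b) hsub hu hza hzsle
            rw [hzws, mul_assoc, simpleRefl_mul_self, mul_one] at hBsame
            exact hBsame
          · exact absurd hu.symm (hne _)
          · exact ((chain_s_of_descent h1 h2 hu).trans hsub).trans hstepzw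
        · intro hu
          rw [← hzws]
          exact hsub

end Lifting
section Assemble
variable {n : ℕ}

theorem chainB_global {j : ℕ} (h1 : 1 ≤ j) (h2 : j ≤ n - 1)
    {u y : Equiv.Perm (Fin n)} (hc : Chain n u y)
    (hu : len n u < len n (u * simpleRefl n j))
    (hy : len n y < len n (y * simpleRefl n j)) :
    Chain n (u * simpleRefl n j) (y * simpleRefl n j) :=
  (AB h1 h2 (len n (y * simpleRefl n j))).1 u y hc hu hy le_rfl

theorem chainA_global {j : ℕ} (h1 : 1 ≤ j) (h2 : j ≤ n - 1)
    {u x : Equiv.Perm (Fin n)} (hc : Chain n u x)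
    (hx : len n (x * simpleRefl n j) < len n x) :
    Chain n (u * simpleRefl n j) x :=
  ((AB h1 h2 (len n x)).2 u x hc hx le_rfl).1

/-- A concatenation `m₁ ++ [c]` being reduced forces `m₁` reduced with an ascent at `c`. -/
theorem concat_reduced {m₁ : List ℕ} {c : ℕ} (h1 : 1 ≤ c) (h2 : c ≤ n - 1)
    (hm₁v : vword n m₁)
    (hred : (m₁ ++ [c]).length = len n (wordProd n (m₁ ++ [c]))) :
    m₁.length = len n (wordProd n m₁) ∧
      len n (wordProd n m₁) < len n (wordProd n m₁ * simpleRefl n c) := by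
  have hprod : wordProd n (m₁ ++ [c]) = wordProd n m₁ * simpleRefl n c := by
    rw [wordProd_append, wordProd_singleton]
  have a1 : len n (wordProd n m₁) ≤ m₁.length := len_le hm₁v
  have a2 : len n (wordProd n (m₁ ++ [c])) ≤ len n (wordProd n m₁) + 1 := by
    rw [hprod]; exact len_mul_simpleRefl_le h1 h2 _
  have a3 : (m₁ ++ [c]).length = m₁.length + 1 := by simp
  have key : m₁.length = len n (wordProd n m₁) := by omega
  refine ⟨key, ?_⟩
  rw [← hprod]
  omega

/-- P1: a reduced subword of a reduced word gives a chain relation. -/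
theorem reduced_sublist_chain (L : List ℕ) (hv : vword n L)
    (hred : L.length = len n (wordProd n L)) :
    ∀ U : List ℕ, U.Sublist L → U.length = len n (wordProd n U) →
      Chain n (wordProd n U) (wordProd n L) := by
  induction L using List.reverseRecOn with
  | nil =>
    intro U hU _
    have : U = [] := List.sublist_nil.1 hU
    subst this
    exact Chain.refl
  | append_singleton L₁ c ih =>
    intro U hU hUred
    have hcv : 1 ≤ c ∧ c ≤ n - 1 := hv c (by simp)
    have hv₁ : vword n L₁ := fun k hk => hv k (by simp [hk])
    have hprod : wordProd n (L₁ ++ [c]) = wordProd n L₁ * simpleRefl n c := by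
      rw [wordProd_append, wordProd_singleton]
    obtain ⟨hlen1, hasc1⟩ := concat_reduced hcv.1 hcv.2 hv₁ hred
    rcases List.sublist_append_iff.1 hU with ⟨U₁, U₂, rfl, hU₁, hU₂⟩
    rcases List.sublist_singleton.1 hU₂ with h2 | h2
    · subst h2
      rw [List.append_nil] at hUred ⊢
      have c1 := ih hv₁ hlen1 U₁ hU₁ hUred
      have c2 : Chain n (wordProd n L₁) (wordProd n (L₁ ++ [c])) := by
        rw [hprod]
        exact chain_ascent hcv.1 hcv.2 hasc1
      exact c1.trans c2
    · subst h2
      have hU₁v : vword n U₁ := fun k hk => hv₁ k (hU₁.mem hk)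
      obtain ⟨hU₁len, hU₁asc⟩ := concat_reduced hcv.1 hcv.2 hU₁v hUred
      have ihc := ih hv₁ hlen1 U₁ hU₁ hU₁len
      have := chainB_global hcv.1 hcv.2 ihc hU₁asc hasc1
      rw [hprod, wordProd_append, wordProd_singleton]
      exact this

theorem demProd_concat (l : List ℕ) (c : ℕ) :
    demProd n (l ++ [c]) = demStep n (demProd n l) c := by
  simp [demProd, List.foldl_append]

/-- Main combinatorial core: every reduced subword of `l` is below `demProd l` in
the chain order. -/
theorem chain_demProd (l : List ℕ) (hv : vword n l) :
    ∀ m : List ℕ, m.Sublist l → m.length = len n (wordProd n m) →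
      Chain n (wordProd n m) (demProd n l) := by
  induction l using List.reverseRecOn with
  | nil =>
    intro m hm _
    have : m = [] := List.sublist_nil.1 hm
    subst this
    exact Chain.refl
  | append_singleton t c ih =>
    intro m hm hmred
    have hcv : 1 ≤ c ∧ c ≤ n - 1 := hv c (by simp)
    have hvt : vword n t := fun k hk => hv k (by simp [hk])
    rw [demProd_concat]
    rcases List.sublist_append_iff.1 hm with ⟨m₁, m₂, rfl, hm₁, hm₂⟩
    by_cases hlt : len n (demProd n t) < len n (demProd n t * simpleRefl n c)
    · rw [demStep, if_pos hlt]
      rcases List.sublist_singleton.1 hm₂ with h2 | h2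
      · subst h2
        rw [List.append_nil] at hmred ⊢
        exact (ih hvt m₁ hm₁ hmred).trans (chain_ascent hcv.1 hcv.2 hlt)
      · subst h2
        have hm₁v : vword n m₁ := fun k hk => hvt k (hm₁.mem hk)
        obtain ⟨hm₁len, hm₁asc⟩ := concat_reduced hcv.1 hcv.2 hm₁v hmred
        have ihc := ih hvt m₁ hm₁ hm₁len
        have := chainB_global hcv.1 hcv.2 ihc hm₁asc hlt
        rw [wordProd_append, wordProd_singleton]
        exact this
    · rw [demStep, if_neg hlt]
      have hdes : len n (demProd n t * simpleRefl n c) < len n (demProd n t) :=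
        lt_of_le_of_ne (not_lt.1 hlt) (len_simpleRefl_ne hcv.1 hcv.2 _)
      rcases List.sublist_singleton.1 hm₂ with h2 | h2
      · subst h2
        rw [List.append_nil] at hmred ⊢
        exact ih hvt m₁ hm₁ hmred
      · subst h2
        have hm₁v : vword n m₁ := fun k hk => hvt k (hm₁.mem hk)
        obtain ⟨hm₁len, hm₁asc⟩ := concat_reduced hcv.1 hcv.2 hm₁v hmred
        have ihc := ih hvt m₁ hm₁ hm₁len
        have := chainA_global hcv.1 hcv.2 ihc hdes
        rw [wordProd_append, wordProd_singleton]
        exact this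

theorem bruhatLE_of_chain {u w : Equiv.Perm (Fin n)} (h : Chain n u w) :
    bruhatLE n u w := by
  obtain ⟨R, hvR, hlenR, hprodR⟩ := len_spec w
  obtain ⟨U, hUsub, hUprod, hUlen⟩ := chain_subword h R hvR hprodR
  refine ⟨R, U, ⟨hvR, by rw [hprodR, ← hlenR]⟩, hprodR, hUsub,
    ⟨fun k hk => hvR k (hUsub.mem hk), by rw [hUprod, ← hUlen]⟩, hUprod⟩

end Assemble
section FrontEnd
variable {n : ℕ}

theorem wordProd_reverse (l : List ℕ) :
    wordProd n l.reverse = (wordProd n l)⁻¹ := by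
  induction l with
  | nil => simp [wordProd]
  | cons c t ih =>
    rw [List.reverse_cons, wordProd_append, ih, wordProd_singleton, wordProd_cons,
      mul_inv_rev, simpleRefl_inv]

theorem mem_pairsLex {p : ℕ × ℕ} : p ∈ pairsLex n ↔ inTriangle n p := by
  obtain ⟨i, j⟩ := p
  constructor
  · intro h
    simp only [pairsLex, List.mem_flatMap, List.mem_map, List.mem_range'_1] at h
    obtain ⟨a, ⟨ha1, ha2⟩, b, ⟨hb1, hb2⟩, heq⟩ := h
    simp only [Prod.mk.injEq] at heq
    obtain ⟨rfl, rfl⟩ := heq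
    exact ⟨by omega, by omega, by omega⟩
  · rintro ⟨h1, h2, h3⟩
    simp only [pairsLex, List.mem_flatMap, List.mem_map, List.mem_range'_1]
    exact ⟨i, ⟨by omega, by omega⟩, j, ⟨by omega, by omega⟩, rfl⟩

theorem mem_pairsBar {p : ℕ × ℕ} : p ∈ pairsBar n ↔ inTriangle n p := by
  obtain ⟨i, j⟩ := p
  constructor
  · intro h
    simp only [pairsBar, List.mem_flatMap, List.mem_map, List.mem_reverse,
      List.mem_range'_1] at h
    obtain ⟨a, ⟨ha1, ha2⟩, b, ⟨hb1, hb2⟩, heq⟩ := h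
    simp only [Prod.mk.injEq] at heq
    obtain ⟨rfl, rfl⟩ := heq
    exact ⟨by omega, by omega, by omega⟩
  · rintro ⟨h1, h2, h3⟩
    simp only [pairsBar, List.mem_flatMap, List.mem_map, List.mem_reverse,
      List.mem_range'_1]
    exact ⟨i, ⟨by omega, by omega⟩, j, ⟨by omega, by omega⟩, rfl⟩

theorem nodup_pairsLex : (pairsLex n).Nodup := by
  rw [pairsLex, List.nodup_flatMap]
  constructor
  · intro i _
    exact (List.nodup_range').map (fun a b h => by simpa using congrArg Prod.snd h)
  · refine List.Pairwise.imp ?_ (List.nodup_range')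
    intro a b hab
    intro x hxa hxb
    simp only [List.mem_map] at hxa hxb
    obtain ⟨j1, -, rfl⟩ := hxa
    obtain ⟨j2, -, he⟩ := hxb
    exact hab (congrArg Prod.fst he.symm)

theorem nodup_pairsBar : (pairsBar n).Nodup := by
  rw [pairsBar, List.nodup_flatMap]
  constructor
  · intro i _
    exact (List.nodup_reverse.2 (List.nodup_range')).map
      (fun a b h => by simpa using congrArg Prod.snd h)
  · refine List.Pairwise.imp ?_ (List.nodup_range')
    intro a b hab
    intro x hxa hxb
    simp only [List.mem_map, List.mem_reverse] at hxa hxb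
    obtain ⟨j1, -, rfl⟩ := hxa
    obtain ⟨j2, -, he⟩ := hxb
    exact hab (congrArg Prod.fst he.symm)

theorem pairsFin_eq : pairsFin n = (pairsBar n).reverse := by
  rw [pairsBar, List.reverse_flatMap, pairsFin]
  congr 1
  funext i
  simp [Function.comp]

theorem mem_pairsFin {p : ℕ × ℕ} : p ∈ pairsFin n ↔ inTriangle n p := by
  rw [pairsFin_eq, List.mem_reverse]
  exact mem_pairsBar

theorem nodup_pairsFin : (pairsFin n).Nodup := by
  rw [pairsFin_eq]
  exact List.nodup_reverse.2 nodup_pairsBar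

theorem length_filter_nodup {α : Type*} [DecidableEq α] {L : List α} (hnd : L.Nodup)
    {S : Finset α} {pr : α → Bool} (hpr : ∀ x, pr x = true ↔ x ∈ S)
    (hcov : ∀ x ∈ S, x ∈ L) :
    (L.filter pr).length = S.card := by
  have hnd' : (L.filter pr).Nodup := hnd.filter _
  have hfs : (L.filter pr).toFinset = S := by
    ext x
    rw [List.mem_toFinset, List.mem_filter]
    constructor
    · rintro ⟨-, h⟩
      exact (hpr x).1 h
    · intro h
      exact ⟨hcov x h, (hpr x).2 h⟩
  rw [← List.toFinset_card_of_nodup hnd', hfs]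

end FrontEnd
/-- If the BiKogan face `K_{λ,μ}(F,F')` is reduced and
`(P,Q) ∈ K_{λ,μ}(F,F')`, then `ϖ(F,F') ≤ *(w(P,Q))` in the Bruhat order. -/
theorem biVarpi_le_demProd_word (n : ℕ) (hn : 1 ≤ n) (lam mu : ℕ → ℤ)
    (hlam : IsPartition n lam) (hmu : IsPartition n mu)
    (F F' : Finset (ℕ × ℕ)) (hF : ∀ p ∈ F, inTriangle n p) (hF' : ∀ p ∈ F', inTriangle n p)
    (hred : biKoganReduced n F F')
    (P Q : ℕ → ℕ → ℝ) (hPQ : (P, Q) ∈ biKoganFace n lam mu F F') :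
    bruhatLE n (biVarpi n F F') (demProd n (fWord n P ++ iWord n Q)) := by
  obtain ⟨hP, hQ, hFc, hF'c⟩ := hPQ
  have hred' : len n (biVarpi n F F') = F.card + F'.card := hred
  set mF : List ℕ := (((pairsFin n).filter fun p => p ∈ F).map fun p => p.2) with hmF
  set mI : List ℕ :=
    (((pairsLex n).filter fun p => p ∈ F').map fun p => p.1 - p.2) with hmI
  have hsubF : mF.Sublist (fWord n P) := by
    rw [hmF, fWord]
    refine List.Sublist.map _ (List.monotone_filter_right _ ?_)
    intro p hp
    simp only [decide_eq_true_eq] at hp ⊢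
    exact hFc p hp
  have hsubI : mI.Sublist (iWord n Q) := by
    rw [hmI, iWord]
    refine List.Sublist.map _ (List.monotone_filter_right _ ?_)
    intro p hp
    simp only [decide_eq_true_eq] at hp ⊢
    exact hF'c p hp
  have hsub : (mF ++ mI).Sublist (fWord n P ++ iWord n Q) := hsubF.append hsubI
  have hvl : vword n (fWord n P ++ iWord n Q) := by
    intro k hk
    rcases List.mem_append.1 hk with hk | hk
    · rw [fWord] at hk
      obtain ⟨p', hp', rfl⟩ := List.mem_map.1 hk
      have ht := mem_pairsFin.1 (List.mem_filter.1 hp').1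
      obtain ⟨h1, h2, h3⟩ := ht
      exact ⟨h1, by omega⟩
    · rw [iWord] at hk
      obtain ⟨p', hp', rfl⟩ := List.mem_map.1 hk
      have ht := mem_pairsLex.1 (List.mem_filter.1 hp').1
      obtain ⟨h1, h2, h3⟩ := ht
      exact ⟨by omega, by omega⟩
  have hprodF : wordProd n mF = (sigmaBarF n F)⁻¹ := by
    have he : mF = ((((pairsBar n).filter fun p => p ∈ F).map fun p => p.2)).reverse := by
      rw [hmF, pairsFin_eq, List.filter_reverse, List.map_reverse]
    rw [he, wordProd_reverse, sigmaBarF]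
  have hprodI : wordProd n mI = sigmaF n F' := rfl
  have hprodm : wordProd n (mF ++ mI) = biVarpi n F F' := by
    rw [wordProd_append, hprodF, hprodI, biVarpi]
  have hlenm : (mF ++ mI).length = len n (wordProd n (mF ++ mI)) := by
    rw [hprodm, hred', List.length_append, hmF, hmI, List.length_map, List.length_map,
      length_filter_nodup nodup_pairsFin (fun x => by simp)
        (fun x hx => mem_pairsFin.2 (hF x hx)),
      length_filter_nodup nodup_pairsLex (fun x => by simp)
        (fun x hx => mem_pairsLex.2 (hF' x hx))]
  have hchain := chain_demProd _ hvl _ hsub hlenm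
  rw [hprodm] at hchain
  exact bruhatLE_of_chain hchain

end KK
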